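/- Let ω > 0, ε > 0, and set c := 3 + √(3/2). Let G be an m×m complex matrix, V an m×m diagonal complex matrix, and U^i ∈ ℂ^m a vector each of whose components has modulus 1. (a) For any vector W ∈ ℂ^m with ω²‖GW‖_∞ < 1, every component of U^i + ω²GW is nonzero. (b) Assume ω²‖GV‖ < 1/2, set b₀ := (1 − 2ω²‖GV‖)/(1 − ω²‖GV‖) and X := V(I − ω²GV)⁻¹U^i, and let X̂ ∈ ℂ^m satisfy ‖X̂ − X‖_∞ ≤ cε. If b₀ > ω²cε‖G‖, then ω²‖GX̂‖_∞ < 1; hence every component of U^i + ω²GX̂ is nonzero, the diagonal matrix V̂ := diag[X̂/(U^i + ω²GX̂)] (entrywise quotient) is well-defined, and the support of the diagonal of V̂ equals the support of X̂. -/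

import Mathlib

/-- The maximum-absolute-row-sum norm of a complex matrix (the operator norm
induced by the `ℓ∞` vector norm). -/
noncomputable def rowSumNorm {m : ℕ} (M : Matrix (Fin m) (Fin m) ℂ) : ℝ :=
  ⨆ i, ∑ j, ‖M i j‖

/-- The `ℓ∞` norm of a complex vector. -/
noncomputable def supNorm {m : ℕ} (W : Fin m → ℂ) : ℝ :=
  ⨆ j, ‖W j‖

lemma le_supNorm {m : ℕ} (W : Fin m → ℂ) (j : Fin m) :
    ‖W j‖ ≤ supNorm W := by
  exact le_ciSup (Set.Finite.bddAbove (Set.finite_range fun j => ‖W j‖)) j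

lemma supNorm_le {m : ℕ} [Nonempty (Fin m)] {W : Fin m → ℂ} {a : ℝ}
    (h : ∀ j, ‖W j‖ ≤ a) : supNorm W ≤ a :=
  ciSup_le h

lemma supNorm_nonneg {m : ℕ} [Nonempty (Fin m)] (W : Fin m → ℂ) : 0 ≤ supNorm W :=
  le_trans (norm_nonneg _) (le_supNorm W (Classical.arbitrary _))

lemma rowSum_le_rowSumNorm {m : ℕ} (M : Matrix (Fin m) (Fin m) ℂ) (i : Fin m) :
    ∑ j, ‖M i j‖ ≤ rowSumNorm M := by
  exact le_ciSup (Set.Finite.bddAbove (Set.finite_range fun i => ∑ j, ‖M i j‖)) i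

lemma rowSumNorm_nonneg {m : ℕ} [Nonempty (Fin m)] (M : Matrix (Fin m) (Fin m) ℂ) :
    0 ≤ rowSumNorm M :=
  le_trans (Finset.sum_nonneg fun _ _ => norm_nonneg _)
    (rowSum_le_rowSumNorm M (Classical.arbitrary _))

lemma abs_mulVec_le {m : ℕ} [Nonempty (Fin m)] (M : Matrix (Fin m) (Fin m) ℂ)
    (W : Fin m → ℂ) (i : Fin m) :
    ‖M.mulVec W i‖ ≤ rowSumNorm M * supNorm W := by
  have h1 : ‖M.mulVec W i‖ ≤ ∑ j, ‖M i j‖ * ‖W j‖ := by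
    simpa [Matrix.mulVec, dotProduct, norm_mul] using
      (norm_sum_le Finset.univ fun j => M i j * W j)
  refine h1.trans ?_
  calc ∑ j, ‖M i j‖ * ‖W j‖
      ≤ ∑ j, ‖M i j‖ * supNorm W := by
        refine Finset.sum_le_sum fun j _ => ?_
        exact mul_le_mul_of_nonneg_left (le_supNorm W j) (norm_nonneg _)
    _ = (∑ j, ‖M i j‖) * supNorm W := by rw [Finset.sum_mul]
    _ ≤ rowSumNorm M * supNorm W :=
        mul_le_mul_of_nonneg_right (rowSum_le_rowSumNorm M i) (supNorm_nonneg W)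

/-- (a) For any `W` with `ω²‖GW‖_∞ < 1`, every component of
`Uⁱ + ω²GW` is nonzero.  (b) If `ω²‖GV‖ < 1/2`, `X = V(I−ω²GV)⁻¹Uⁱ`,
`‖X̂ − X‖_∞ ≤ (3+√(3/2))ε` and `b₀ > ω²(3+√(3/2))ε‖G‖`, then `ω²‖GX̂‖_∞ < 1`,
every component of `Uⁱ + ω²GX̂` is nonzero, and the entrywise quotient
`V̂ = diag[X̂/(Uⁱ + ω²GX̂)]` has the same support as `X̂`. -/
theorem stmt_7 (m : ℕ) (hm : 1 ≤ m) (ω ε : ℝ) (hω : 0 < ω) (hε : 0 < ε)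
    (c : ℝ) (hc : c = 3 + Real.sqrt (3 / 2))
    (G : Matrix (Fin m) (Fin m) ℂ) (v : Fin m → ℂ)
    (Ui : Fin m → ℂ) (hUi : ∀ j, ‖Ui j‖ = 1) :
    (∀ W : Fin m → ℂ, ω ^ 2 * supNorm (G.mulVec W) < 1 →
      ∀ j, Ui j + (ω ^ 2 : ℂ) * G.mulVec W j ≠ 0) ∧
    (ω ^ 2 * rowSumNorm (G * Matrix.diagonal v) < 1 / 2 →
      ∀ X Xh : Fin m → ℂ,
        X = (Matrix.diagonal v).mulVec
          (((1 - (ω ^ 2 : ℂ) • (G * Matrix.diagonal v))⁻¹).mulVec Ui) →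
        supNorm (Xh - X) ≤ c * ε →
        (1 - 2 * (ω ^ 2 * rowSumNorm (G * Matrix.diagonal v))) /
            (1 - ω ^ 2 * rowSumNorm (G * Matrix.diagonal v)) >
          ω ^ 2 * c * ε * rowSumNorm G →
        ω ^ 2 * supNorm (G.mulVec Xh) < 1 ∧
        (∀ j, Ui j + (ω ^ 2 : ℂ) * G.mulVec Xh j ≠ 0) ∧
        (∀ j, Xh j / (Ui j + (ω ^ 2 : ℂ) * G.mulVec Xh j) ≠ 0 ↔ Xh j ≠ 0)) := by
  haveI : Nonempty (Fin m) := ⟨⟨0, hm⟩⟩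
  have homega : ‖((ω ^ 2 : ℂ))‖ = ω ^ 2 := by
    rw [show ((ω ^ 2 : ℂ)) = ((ω : ℂ)) ^ 2 by push_cast; ring, norm_pow,
      Complex.norm_real, Real.norm_eq_abs, sq_abs]
  -- Part (a)
  have key : ∀ W : Fin m → ℂ, ω ^ 2 * supNorm (G.mulVec W) < 1 →
      ∀ j, Ui j + (ω ^ 2 : ℂ) * G.mulVec W j ≠ 0 := by
    intro W hW j h
    have h1 : Ui j = -((ω ^ 2 : ℂ) * G.mulVec W j) := by
      linear_combination h
    have h2 : (1 : ℝ) = ω ^ 2 * ‖G.mulVec W j‖ := by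
      rw [← hUi j, h1, norm_neg, norm_mul, homega]
    have h3 : ‖G.mulVec W j‖ ≤ supNorm (G.mulVec W) := le_supNorm _ j
    nlinarith [sq_nonneg ω]
  refine ⟨key, ?_⟩
  -- Part (b)
  intro ht X Xh hX hXh hb
  set D := Matrix.diagonal v with hD
  set r := rowSumNorm (G * D) with hr
  set A : Matrix (Fin m) (Fin m) ℂ := (ω ^ 2 : ℂ) • (G * D) with hA
  have hr0 : 0 ≤ r := rowSumNorm_nonneg _
  have homsq : (0:ℝ) < ω ^ 2 := by positivity
  have ht1 : ω ^ 2 * r < 1 := by linarith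
  have h1t : 0 < 1 - ω ^ 2 * r := by linarith
  -- bound on A.mulVec
  have habs : ∀ (z : Fin m → ℂ) (j : Fin m),
      ‖A.mulVec z j‖ ≤ ω ^ 2 * r * supNorm z := by
    intro z j
    have : A.mulVec z j = (ω ^ 2 : ℂ) * (G * D).mulVec z j := by
      rw [hA, Matrix.smul_mulVec]
      simp [Pi.smul_apply, smul_eq_mul]
    rw [this, norm_mul, homega, mul_assoc]
    exact mul_le_mul_of_nonneg_left (abs_mulVec_le _ _ j) (le_of_lt homsq)
  -- invertibility of 1 - A
  have hinj : Function.Injective ((1 - A).mulVec) := by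
    intro x y hxy
    have hz : ∀ j : Fin m, (x - y) j = A.mulVec (x - y) j := by
      intro j
      have h0 : (1 - A).mulVec (x - y) = 0 := by
        rw [Matrix.mulVec_sub, hxy, sub_self]
      have := congrFun h0 j
      rw [Matrix.sub_mulVec, Matrix.one_mulVec] at this
      have := sub_eq_zero.mp this
      simpa using this
    have hle : supNorm (x - y) ≤ ω ^ 2 * r * supNorm (x - y) := by
      refine supNorm_le fun j => ?_
      rw [hz j]; exact habs _ j
    have hS : 0 ≤ supNorm (x - y) := supNorm_nonneg _
    have hS0 : supNorm (x - y) = 0 := by nlinarith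
    have hzero : ∀ j, (x - y) j = 0 := by
      intro j
      have h4 : ‖(x - y) j‖ ≤ 0 := by
        have := le_supNorm (x - y) j; linarith
      have := norm_nonneg ((x - y) j)
      exact norm_eq_zero.mp (le_antisymm h4 this)
    funext k
    have := hzero k
    simpa [sub_eq_zero] using this
  have hunit : IsUnit (1 - A) := Matrix.mulVec_injective_iff_isUnit.mp hinj
  have hBmul : (1 - A) * (1 - A)⁻¹ = 1 :=
    Matrix.mul_nonsing_inv _ ((Matrix.isUnit_iff_isUnit_det _).mp hunit)
  set y : Fin m → ℂ := ((1 - A)⁻¹).mulVec Ui with hy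
  have hy1 : (1 - A).mulVec y = Ui := by
    rw [hy, Matrix.mulVec_mulVec, hBmul, Matrix.one_mulVec]
  have hy2 : ∀ j, y j = Ui j + A.mulVec y j := by
    intro j
    have := congrFun hy1 j
    rw [Matrix.sub_mulVec, Matrix.one_mulVec] at this
    have : y j - A.mulVec y j = Ui j := this
    linear_combination this
  have hyS : 0 ≤ supNorm y := supNorm_nonneg _
  have hy3 : supNorm y ≤ 1 + ω ^ 2 * r * supNorm y := by
    refine supNorm_le fun j => ?_
    rw [hy2 j]
    calc ‖Ui j + A.mulVec y j‖
        ≤ ‖Ui j‖ + ‖A.mulVec y j‖ := norm_add_le _ _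
      _ ≤ 1 + ω ^ 2 * r * supNorm y := by
          rw [hUi j]; exact add_le_add_right (habs y j) 1
  -- G.mulVec X = (G*D).mulVec y
  have hGX : G.mulVec X = (G * D).mulVec y := by
    rw [hX, Matrix.mulVec_mulVec]
  -- main bound
  have hG0 : 0 ≤ rowSumNorm G := rowSumNorm_nonneg _
  have hcε : 0 ≤ c * ε := le_trans (supNorm_nonneg _) hXh
  have hmain : supNorm (G.mulVec Xh) ≤ rowSumNorm G * (c * ε) + r * supNorm y := by
    refine supNorm_le fun j => ?_
    have hsplit : G.mulVec Xh j = G.mulVec (Xh - X) j + (G * D).mulVec y j := by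
      rw [← hGX]
      have := congrFun (Matrix.mulVec_sub G Xh X) j
      rw [this, Pi.sub_apply]; ring
    rw [hsplit]
    calc ‖G.mulVec (Xh - X) j + (G * D).mulVec y j‖
        ≤ ‖G.mulVec (Xh - X) j‖ + ‖(G * D).mulVec y j‖ :=
          norm_add_le _ _
      _ ≤ rowSumNorm G * supNorm (Xh - X) + r * supNorm y :=
          add_le_add (abs_mulVec_le _ _ j) (abs_mulVec_le _ _ j)
      _ ≤ rowSumNorm G * (c * ε) + r * supNorm y := by
          have := mul_le_mul_of_nonneg_left hXh hG0
          linarith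
  -- conclude part 1
  have hb' : ω ^ 2 * c * ε * rowSumNorm G * (1 - ω ^ 2 * r) < 1 - 2 * (ω ^ 2 * r) := by
    have := (lt_div_iff₀ h1t).mp hb
    linarith
  have part1 : ω ^ 2 * supNorm (G.mulVec Xh) < 1 := by
    have h5 : ω ^ 2 * supNorm (G.mulVec Xh) ≤
        ω ^ 2 * (rowSumNorm G * (c * ε)) + ω ^ 2 * r * supNorm y := by
      have := mul_le_mul_of_nonneg_left hmain (le_of_lt homsq)
      linarith [this]
    nlinarith [mul_le_mul_of_nonneg_left hy3 (mul_nonneg (le_of_lt homsq) hr0)]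
  refine ⟨part1, key Xh part1, fun j => ?_⟩
  have hd := key Xh part1 j
  constructor
  · intro h hx0; exact h (by rw [hx0, zero_div])
  · intro hx0; exact div_ne_zero hx0 hd
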